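/- Let I be a weakly thinnable ideal on ℕ and let x = (x_n) be a sequence taking values in a topological space. Then for Lebesgue-almost every ω ∈ (0,1] (with respect to Lebesgue measure on (0,1]), one has Λ_{x↾ω}(I) ⊆ Λ_x(I). In fact, this inclusion holds for every normal number ω ∈ (0,1], i.e., every ω whose non-terminating dyadic digits d_i(ω) satisfy lim_n (d_1(ω)+⋯+d_n(ω))/n = 1/2. -/

import Mathlib

open Filter Topology MeasureTheory Set

noncomputable section

/-- A lower semicontinuous submeasure on `ℕ`:  `φ : P(ℕ) → [0,∞]` with `φ(∅) = 0`,
`φ({n}) < ∞`, monotone, subadditive, and `φ(A) = lim_n φ(A ∩ {0,…,n-1})`. -/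
structure LSCSubmeasure where
  toFun : Set ℕ → ENNReal
  empty' : toFun ∅ = 0
  singleton_lt_top' : ∀ n : ℕ, toFun {n} < ⊤
  mono' : ∀ ⦃A B : Set ℕ⦄, A ⊆ B → toFun A ≤ toFun B
  subadd' : ∀ A B : Set ℕ, toFun (A ∪ B) ≤ toFun A + toFun B
  lsc' : ∀ A : Set ℕ, Tendsto (fun n => toFun (A ∩ {m | m < n})) atTop (𝓝 (toFun A))

/-- `‖A‖_φ := lim_n φ(A \ {0,…,n-1})`; since the sequence is antitone, the limit
is the infimum. -/
def LSCSubmeasure.norm (φ : LSCSubmeasure) (A : Set ℕ) : ENNReal :=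
  ⨅ n : ℕ, φ.toFun (A \ {m | m < n})

/-- The (analytic P-)ideal `I_φ = {A : ‖A‖_φ = 0}` associated with `φ`. -/
def LSCSubmeasure.ideal (φ : LSCSubmeasure) : Set (Set ℕ) :=
  {A | φ.norm A = 0}

/-- `I` is an ideal on `ℕ`: closed under finite unions and subsets, contains all
finite sets, and is proper. -/
def IsIdealOnNat (I : Set (Set ℕ)) : Prop :=
  (∀ A B : Set ℕ, A ∈ I → B ∈ I → A ∪ B ∈ I) ∧
  (∀ A B : Set ℕ, A ⊆ B → B ∈ I → A ∈ I) ∧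
  (∀ A : Set ℕ, A.Finite → A ∈ I) ∧
  (Set.univ : Set ℕ) ∉ I

/-- Convergence of the subsequence `(x_n : n ∈ A)` to `l`. -/
def ConvergesAlong {X : Type*} [TopologicalSpace X] (x : ℕ → X) (A : Set ℕ) (l : X) : Prop :=
  Tendsto x (atTop ⊓ 𝓟 A) (𝓝 l)

/-- `Λ_x(I)`: the set of `I`-limit points of the sequence `x`. -/
def idealLimitPoints {X : Type*} [TopologicalSpace X] (I : Set (Set ℕ)) (x : ℕ → X) : Set X :=
  {l | ∃ A : Set ℕ, A ∉ I ∧ ConvergesAlong x A l}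

/-- `Γ_x(I)`: the set of `I`-cluster points of the sequence `x`. -/
def idealClusterPoints {X : Type*} [TopologicalSpace X] (I : Set (Set ℕ)) (x : ℕ → X) : Set X :=
  {l | ∀ U ∈ 𝓝 l, {n | x n ∈ U} ∉ I}

/-- `Λ_x(I_φ, q)`: the set of `ℓ` such that some subsequence `(x_n : n ∈ A)` with
`‖A‖_φ ≥ q` converges to `ℓ`. -/
def LambdaQ {X : Type*} [TopologicalSpace X] (φ : LSCSubmeasure) (x : ℕ → X) (q : ℝ) : Set X :=
  {l | ∃ A : Set ℕ, ENNReal.ofReal q ≤ φ.norm A ∧ ConvergesAlong x A l}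

/-- The summable ideal `I_f = {S : ∑_{n ∈ S} f(n) < ∞}`. -/
def summableIdeal (f : ℕ → ℝ) : Set (Set ℕ) := {S | Summable (S.indicator f)}

/-- `A` has asymptotic density `d`. -/
def HasDensity (A : Set ℕ) (d : ℝ) : Prop :=
  Tendsto (fun n => (∑ i ∈ Finset.range n, A.indicator (fun _ => (1 : ℝ)) i) / (n : ℝ))
    atTop (𝓝 d)

/-- `A_B := {a_b : b ∈ B}`, where `a_0 < a_1 < ⋯` is the increasing enumeration of `A`. -/
def sel (A B : Set ℕ) : Set ℕ := (fun b => Nat.nth (· ∈ A) b) '' B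

/-- `A ≤ B`: the increasing enumerations satisfy `a_n ≤ b_n` for all `n`. -/
def enumLE (A B : Set ℕ) : Prop := ∀ n : ℕ, Nat.nth (· ∈ A) n ≤ Nat.nth (· ∈ B) n

/-- `I` is weakly thinnable: `A_B ∉ I` whenever `A` has non-zero asymptotic density
and `B ∉ I`. -/
def WeaklyThinnable (I : Set (Set ℕ)) : Prop :=
  ∀ A B : Set ℕ, (∃ d : ℝ, 0 < d ∧ HasDensity A d) → B ∉ I → sel A B ∉ I

/-- `I` is thinnable: weakly thinnable, and moreover `B_A ∉ I` under the same
hypotheses, and `X ∉ I` whenever `X ≤ Y` and `Y ∉ I`. -/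
def Thinnable (I : Set (Set ℕ)) : Prop :=
  WeaklyThinnable I ∧
  (∀ A B : Set ℕ, (∃ d : ℝ, 0 < d ∧ HasDensity A d) → B ∉ I → sel B A ∉ I) ∧
  (∀ X Y : Set ℕ, enumLE X Y → Y ∉ I → X ∉ I)

/-- The analytic P-ideal `I_φ` is strongly thinnable. -/
def StronglyThinnable (φ : LSCSubmeasure) : Prop :=
  WeaklyThinnable φ.ideal ∧
  (∀ q : ℝ, 0 < q → ∀ A : Set ℕ, ∀ a : ℝ, 0 < a → HasDensity A a →
    ∃ c : ℝ, 0 < c ∧ ∀ B : Set ℕ, ENNReal.ofReal q ≤ φ.norm B →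
      ENNReal.ofReal (c * q) ≤ φ.norm (sel B A)) ∧
  (∃ c : ℝ, 0 < c ∧ ∀ X Y : Set ℕ, enumLE X Y →
    ENNReal.ofReal c * φ.norm Y ≤ φ.norm X)

/-- The `i`-th digit (0-indexed, so this is `d_{i+1}(ω)`) of the non-terminating
dyadic expansion of `ω ∈ (0,1]`. -/
def dyadicDigit (ω : ℝ) (i : ℕ) : ℕ :=
  (⌈(2 : ℝ) ^ (i + 1) * ω⌉ - 2 * ⌈(2 : ℝ) ^ i * ω⌉ + 1).toNat

/-- `x↾ω`: the subsequence of `x` indexed by the set `{i : d_i(ω) = 1}`. -/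
def subseq {X : Type*} (x : ℕ → X) (ω : ℝ) : ℕ → X :=
  fun k => x (Nat.nth (fun i => dyadicDigit ω i = 1) k)

/-- The Erdős–Ulam ideal `E_f` associated with a weight `f`. -/
def ErdosUlamIdeal (f : ℕ → ℝ) : Set (Set ℕ) :=
  {S | Tendsto (fun n => (∑ i ∈ Finset.Icc 1 n, S.indicator f i) /
        (∑ i ∈ Finset.Icc 1 n, f i)) atTop (𝓝 0)}

/-- The upper `α`-density `d_α^⋆(S)`. -/
def upperAlphaDensity (α : ℝ) (S : Set ℕ) : ℝ :=
  limsup (fun n => (∑ i ∈ Finset.Icc 1 n, S.indicator (fun i => (i : ℝ) ^ α) i) /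
    (∑ i ∈ Finset.Icc 1 n, (i : ℝ) ^ α)) atTop

/-- `S` has `α`-asymptotic density `d`. -/
def HasAlphaDensity (α : ℝ) (S : Set ℕ) (d : ℝ) : Prop :=
  Tendsto (fun n => (∑ i ∈ Finset.Icc 1 n, S.indicator (fun i => (i : ℝ) ^ α) i) /
    (∑ i ∈ Finset.Icc 1 n, (i : ℝ) ^ α)) atTop (𝓝 d)

/-- The ideal `I_α` of sets of zero upper `α`-density. -/
def Ialpha (α : ℝ) : Set (Set ℕ) := {S | upperAlphaDensity α S = 0}


section Stmt3Aux

open scoped ENNReal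
open ProbabilityTheory

private lemma ceil_div_pow (x : ℝ) (s : ℕ) :
    ⌈x / (2:ℝ)^s⌉ = ⌈((⌈x⌉ : ℤ) : ℝ) / (2:ℝ)^s⌉ := by
  have h2 : (0:ℝ) < (2:ℝ)^s := by positivity
  apply le_antisymm
  · exact Int.ceil_mono (by gcongr; exact Int.le_ceil x)
  · rw [Int.ceil_le, div_le_iff₀ h2]
    have h1 : x ≤ (⌈x / (2:ℝ)^s⌉ : ℝ) * 2^s := by
      rw [← div_le_iff₀ h2]; exact Int.le_ceil _
    calc ((⌈x⌉ : ℤ) : ℝ) ≤ ((⌈x / (2:ℝ)^s⌉ * 2^s : ℤ) : ℝ) := by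
          exact_mod_cast Int.ceil_le.2 (by push_cast; exact h1)
      _ = (⌈x / (2:ℝ)^s⌉ : ℝ) * 2^s := by push_cast; ring

private lemma digit_bounds (ω : ℝ) (i : ℕ) :
    2 * ⌈(2:ℝ)^i * ω⌉ - 1 ≤ ⌈(2:ℝ)^(i+1) * ω⌉ ∧
      ⌈(2:ℝ)^(i+1) * ω⌉ ≤ 2 * ⌈(2:ℝ)^i * ω⌉ := by
  have h2t : (2:ℝ)^(i+1) * ω = 2 * ((2:ℝ)^i * ω) := by rw [pow_succ]; ring
  constructor
  · have h1 : (((2 * ⌈(2:ℝ)^i * ω⌉ - 2 : ℤ)) : ℝ) < (2:ℝ)^(i+1) * ω := by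
      have hc := Int.ceil_lt_add_one ((2:ℝ)^i * ω)
      push_cast
      linarith [hc, h2t]
    have := Int.lt_ceil.2 h1
    omega
  · apply Int.ceil_le.2
    have hc := Int.le_ceil ((2:ℝ)^i * ω)
    push_cast
    linarith [hc, h2t]

private lemma digit_le_one (ω : ℝ) (i : ℕ) : dyadicDigit ω i ≤ 1 := by
  obtain ⟨h1, h2⟩ := digit_bounds ω i
  unfold dyadicDigit
  omega

private lemma digit_eq_one_iff (ω : ℝ) (i : ℕ) :
    dyadicDigit ω i = 1 ↔ Even ⌈(2:ℝ)^(i+1) * ω⌉ := by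
  obtain ⟨h1, h2⟩ := digit_bounds ω i
  unfold dyadicDigit
  rw [Int.even_iff]
  omega

private def DS (i : ℕ) : Set ℝ := {ω | Even ⌈(2:ℝ)^(i+1) * ω⌉}

private lemma measurableSet_DS (i : ℕ) : MeasurableSet (DS i) := by
  have h : DS i = (fun ω : ℝ => ⌈(2:ℝ)^(i+1) * ω⌉) ⁻¹' {m : ℤ | Even m} := rfl
  rw [h]
  exact (Int.measurable_ceil.comp (measurable_id.const_mul _)) (Set.to_countable _).measurableSet

private lemma digit_indicator (ω : ℝ) (i : ℕ) :
    ((dyadicDigit ω i : ℝ)) = (DS i).indicator (fun _ => (1:ℝ)) ω := by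
  by_cases h : ω ∈ DS i
  · rw [Set.indicator_of_mem h, (digit_eq_one_iff ω i).2 h]; norm_num
  · rw [Set.indicator_of_notMem h]
    have h1 := digit_le_one ω i
    have h2 : dyadicDigit ω i ≠ 1 := fun hc => h ((digit_eq_one_iff ω i).1 hc)
    have h3 : dyadicDigit ω i = 0 := by omega
    rw [h3]; norm_num

private lemma vol_eq (n : ℕ) (P : ℤ → Prop) [DecidablePred P] :
    volume ({ω : ℝ | P ⌈(2:ℝ)^n * ω⌉} ∩ Set.Ioc 0 1) =
      (((Finset.Icc (1:ℤ) (2^n)).filter P).card : ENNReal) * ((2:ENNReal)^n)⁻¹ := by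
  have h2 : (0:ℝ) < (2:ℝ)^n := by positivity
  have hset : {ω : ℝ | P ⌈(2:ℝ)^n * ω⌉} ∩ Set.Ioc 0 1 =
      ⋃ m ∈ (Finset.Icc (1:ℤ) (2^n)).filter P,
        Set.Ioc (((m:ℝ)-1)/2^n) ((m:ℝ)/2^n) := by
    ext ω
    simp only [Set.mem_inter_iff, Set.mem_setOf_eq, Set.mem_Ioc, Set.mem_iUnion,
      Finset.mem_filter, Finset.mem_Icc, exists_prop]
    constructor
    · rintro ⟨hP, h0, h1⟩
      have hpos : (0:ℝ) < (2:ℝ)^n * ω := by positivity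
      refine ⟨⌈(2:ℝ)^n * ω⌉, ⟨⟨?_, ?_⟩, hP⟩, ?_, ?_⟩
      · have := Int.ceil_pos.2 hpos; omega
      · rw [Int.ceil_le]; push_cast; nlinarith
      · rw [div_lt_iff₀ h2]
        nlinarith [Int.ceil_lt_add_one ((2:ℝ)^n * ω)]
      · rw [le_div_iff₀ h2]
        nlinarith [Int.le_ceil ((2:ℝ)^n * ω)]
    · rintro ⟨m, ⟨⟨hm1, hm2⟩, hP⟩, hlo, hhi⟩
      have hm1' : (1:ℝ) ≤ (m:ℝ) := by exact_mod_cast hm1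
      have hm2' : (m:ℝ) ≤ (2:ℝ)^n := by exact_mod_cast hm2
      have hω0 : 0 < ω := lt_of_le_of_lt (div_nonneg (by linarith) h2.le) hlo
      have hω1 : ω ≤ 1 := hhi.trans (by rw [div_le_one h2]; exact hm2')
      have hceil : ⌈(2:ℝ)^n * ω⌉ = m := by
        rw [Int.ceil_eq_iff]
        rw [div_lt_iff₀ h2] at hlo
        rw [le_div_iff₀ h2] at hhi
        constructor <;> nlinarith
      rw [hceil]; exact ⟨hP, hω0, hω1⟩
  have hdisj : (↑((Finset.Icc (1:ℤ) (2^n)).filter P) : Set ℤ).PairwiseDisjoint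
      (fun m : ℤ => Set.Ioc (((m:ℝ)-1)/2^n) ((m:ℝ)/2^n)) := by
    have key : ∀ u v : ℤ, u < v →
        Disjoint (Set.Ioc (((u:ℝ)-1)/2^n) ((u:ℝ)/2^n))
          (Set.Ioc (((v:ℝ)-1)/2^n) ((v:ℝ)/2^n)) := by
      intro u v huv
      apply Set.Ioc_disjoint_Ioc.2
      have huv' : (u:ℝ) ≤ (v:ℝ) - 1 := by
        have h5 : u ≤ v - 1 := by omega
        have h6 : (u:ℝ) ≤ ((v - 1 : ℤ) : ℝ) := by exact_mod_cast h5
        push_cast at h6; linarith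
      calc min ((u:ℝ)/2^n) ((v:ℝ)/2^n) ≤ (u:ℝ)/2^n := min_le_left _ _
        _ ≤ ((v:ℝ)-1)/2^n := by gcongr
        _ ≤ max (((u:ℝ)-1)/2^n) (((v:ℝ)-1)/2^n) := le_max_right _ _
    intro a _ b _ hab
    rcases hab.lt_or_gt with h | h
    · exact key a b h
    · exact (key b a h).symm
  rw [hset, measure_biUnion_finset hdisj (fun b _ => measurableSet_Ioc)]
  have hoc : ∀ m : ℤ, volume (Set.Ioc (((m:ℝ)-1)/2^n) ((m:ℝ)/2^n)) = ((2:ENNReal)^n)⁻¹ := by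
    intro m
    rw [Real.volume_Ioc]
    have h3 : (m:ℝ)/2^n - ((m:ℝ)-1)/2^n = 1/2^n := by field_simp; ring
    rw [h3]
    rw [one_div, ENNReal.ofReal_inv_of_pos h2, ENNReal.ofReal_pow (by norm_num : (0:ℝ) ≤ 2)]
    norm_num
  rw [Finset.sum_congr rfl (fun m _ => hoc m), Finset.sum_const, nsmul_eq_mul]

private lemma count_even (N : ℤ) (hN : 0 ≤ N) :
    ((Finset.Icc (1:ℤ) (2*N)).filter (fun m : ℤ => Even m)).card = N.toNat := by
  classical
  have himg : (Finset.Icc (1:ℤ) N).image (fun r => 2*r)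
      = (Finset.Icc (1:ℤ) (2*N)).filter (fun m : ℤ => Even m) := by
    ext m
    simp only [Finset.mem_image, Finset.mem_filter, Finset.mem_Icc]
    constructor
    · rintro ⟨r, ⟨h1, h2⟩, rfl⟩
      exact ⟨⟨by omega, by omega⟩, ⟨r, by ring⟩⟩
    · rintro ⟨⟨h1, h2⟩, r, hr⟩
      exact ⟨r, ⟨by omega, by omega⟩, by omega⟩
  rw [← himg, Finset.card_image_of_injective _ (fun a b h => by omega), Int.card_Icc]
  omega

private lemma count_even_ceil (u : ℕ) (Q : ℤ) (hQ : 0 < Q) :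
    ((Finset.Icc (1:ℤ) (Q * 2^u)).filter (fun m : ℤ => Even ⌈(m:ℝ)/2^u⌉)).card
      = ((Finset.Icc (1:ℤ) Q).filter (fun m : ℤ => Even m)).card * 2^u := by
  classical
  have h2 : (0:ℝ) < (2:ℝ)^u := by positivity
  have hmap : ∀ m ∈ (Finset.Icc (1:ℤ) (Q * 2^u)).filter (fun m : ℤ => Even ⌈(m:ℝ)/2^u⌉),
      (⌈(m:ℝ)/2^u⌉) ∈ (Finset.Icc (1:ℤ) Q).filter (fun m : ℤ => Even m) := by
    intro m hm
    simp only [Finset.mem_filter, Finset.mem_Icc] at hm ⊢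
    obtain ⟨⟨h1, hq⟩, he⟩ := hm
    have hm1 : (1:ℝ) ≤ (m:ℝ) := by exact_mod_cast h1
    refine ⟨⟨?_, ?_⟩, he⟩
    · have hpos : (0:ℝ) < (m:ℝ)/2^u := by positivity
      have := Int.ceil_pos.2 hpos; omega
    · rw [Int.ceil_le, div_le_iff₀ h2]
      have : (m:ℝ) ≤ (Q:ℝ) * 2^u := by exact_mod_cast hq
      linarith
  rw [Finset.card_eq_sum_card_fiberwise hmap]
  have hfib : ∀ b ∈ (Finset.Icc (1:ℤ) Q).filter (fun m : ℤ => Even m),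
      (((Finset.Icc (1:ℤ) (Q * 2^u)).filter (fun m : ℤ => Even ⌈(m:ℝ)/2^u⌉)).filter
        (fun m : ℤ => ⌈(m:ℝ)/2^u⌉ = b)).card = 2^u := by
    intro b hb
    simp only [Finset.mem_filter, Finset.mem_Icc] at hb
    obtain ⟨⟨hb1, hbQ⟩, hbe⟩ := hb
    have hbeq : ((Finset.Icc (1:ℤ) (Q * 2^u)).filter (fun m : ℤ => Even ⌈(m:ℝ)/2^u⌉)).filter
        (fun m : ℤ => ⌈(m:ℝ)/2^u⌉ = b) = Finset.Ioc ((b-1)*2^u) (b*2^u) := by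
      ext m
      simp only [Finset.mem_filter, Finset.mem_Icc, Finset.mem_Ioc]
      constructor
      · rintro ⟨⟨⟨h1, hq⟩, he⟩, hbm⟩
        have hlow : ((b:ℝ)-1) < (m:ℝ)/2^u := by
          have := Int.ceil_lt_add_one ((m:ℝ)/2^u)
          rw [hbm] at this; push_cast at this; linarith
        have hup : (m:ℝ)/2^u ≤ (b:ℝ) := by
          have := Int.le_ceil ((m:ℝ)/2^u)
          rw [hbm] at this; exact_mod_cast this
        rw [div_le_iff₀ h2] at hup
        rw [lt_div_iff₀ h2] at hlow
        constructor
        · exact_mod_cast (by push_cast; linarith : (((b-1)*2^u : ℤ) : ℝ) < (m:ℝ))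
        · exact_mod_cast (by push_cast; linarith : ((m:ℝ)) ≤ (((b*2^u : ℤ)) : ℝ))
      · rintro ⟨hlo, hhi⟩
        have hceil : ⌈(m:ℝ)/2^u⌉ = b := by
          rw [Int.ceil_eq_iff]
          constructor
          · rw [lt_div_iff₀ h2]
            exact_mod_cast (by exact_mod_cast hlo : (((b-1)*2^u : ℤ) : ℝ) < (m:ℝ))
          · rw [div_le_iff₀ h2]
            exact_mod_cast (by exact_mod_cast hhi : ((m:ℝ)) ≤ (((b*2^u : ℤ)) : ℝ))
        have hnn : (0:ℤ) ≤ (b-1)*2^u := mul_nonneg (by omega) (by positivity)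
        have hbQ' : b*2^u ≤ Q*2^u := mul_le_mul_of_nonneg_right hbQ (by positivity)
        refine ⟨⟨⟨by omega, by omega⟩, ?_⟩, hceil⟩
        rw [hceil]; exact hbe
    rw [hbeq, Int.card_Ioc]
    have h4 : b*2^u - (b-1)*2^u = 2^u := by ring
    rw [h4]
    rw [show ((2:ℤ)^u) = ((2^u : ℕ) : ℤ) by push_cast; ring, Int.toNat_natCast]
  rw [Finset.sum_congr rfl hfib, Finset.sum_const, smul_eq_mul]

private lemma enn_pow_cancel (a b : ℕ) :
    (2:ENNReal)^a * ((2:ENNReal)^(a+b))⁻¹ = ((2:ENNReal)^b)⁻¹ := by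
  rw [pow_add, ENNReal.mul_inv (Or.inl (pow_ne_zero _ two_ne_zero))
    (Or.inl (ENNReal.pow_ne_top ENNReal.ofNat_ne_top)), ← mul_assoc,
    ENNReal.mul_inv_cancel (pow_ne_zero _ two_ne_zero)
      (ENNReal.pow_ne_top ENNReal.ofNat_ne_top), one_mul]

private lemma vol_DS (i : ℕ) : volume (DS i ∩ Set.Ioc 0 1) = 2⁻¹ := by
  classical
  have h := vol_eq (i+1) (fun m : ℤ => Even m)
  rw [show DS i ∩ Set.Ioc (0:ℝ) 1
      = {ω : ℝ | (fun m : ℤ => Even m) ⌈(2:ℝ)^(i+1) * ω⌉} ∩ Set.Ioc 0 1 from rfl, h,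
    show (2:ℤ)^(i+1) = 2 * 2^i by ring, count_even _ (by positivity)]
  rw [show ((2:ℤ)^i).toNat = 2^i by
    rw [show ((2:ℤ)^i) = ((2^i : ℕ) : ℤ) by push_cast; ring, Int.toNat_natCast]]
  rw [Nat.cast_pow, Nat.cast_ofNat]
  have hc := enn_pow_cancel i 1
  rw [pow_one] at hc
  exact hc

private lemma vol_DS_inter {i j : ℕ} (hij : i < j) :
    volume (DS i ∩ DS j ∩ Set.Ioc 0 1) = 4⁻¹ := by
  classical
  set u := j - i - 1 with hu
  have hji : j - i = u + 1 := by omega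
  have hpow : ∀ ω : ℝ, (2:ℝ)^(i+1) * ω = ((2:ℝ)^(j+1) * ω) / 2^(j-i) := by
    intro ω
    rw [eq_div_iff (by positivity)]
    have hh : (2:ℝ)^(i+1) * (2:ℝ)^(j-i) = 2^(j+1) := by
      rw [← pow_add]; congr 1; omega
    rw [mul_right_comm, hh]
  have hsets : DS i ∩ DS j
      = {ω : ℝ | (fun m : ℤ => Even ⌈(m:ℝ)/2^(j-i)⌉ ∧ Even m) ⌈(2:ℝ)^(j+1) * ω⌉} := by
    ext ω
    simp only [DS, Set.mem_inter_iff, Set.mem_setOf_eq]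
    have key : ⌈(2:ℝ)^(i+1) * ω⌉ = ⌈((⌈(2:ℝ)^(j+1)*ω⌉ : ℤ) : ℝ)/2^(j-i)⌉ := by
      rw [hpow ω, ceil_div_pow]
    rw [key]
  have hveq := vol_eq (j+1) (fun m : ℤ => Even ⌈(m:ℝ)/2^(j-i)⌉ ∧ Even m)
  rw [hsets, hveq]
  have hp2j : (2:ℤ)^(j+1) = 2*2^j := by ring
  have himg : ((Finset.Icc (1:ℤ) (2^(j+1))).filter
        (fun m : ℤ => Even ⌈(m:ℝ)/2^(j-i)⌉ ∧ Even m))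
      = ((Finset.Icc (1:ℤ) (2^j)).filter (fun r : ℤ => Even ⌈(r:ℝ)/2^u⌉)).image
          (fun r => 2*r) := by
    ext m
    simp only [Finset.mem_image, Finset.mem_filter, Finset.mem_Icc]
    constructor
    · rintro ⟨⟨h1, h2'⟩, he1, he2⟩
      obtain ⟨r, hr⟩ := he2
      have hmr : (m:ℝ)/2^(j-i) = (r:ℝ)/2^u := by
        rw [hji, pow_succ]
        have : (m:ℝ) = 2 * (r:ℝ) := by
          have : m = 2 * r := by omega
          exact_mod_cast this
        rw [this]
        field_simp
      rw [hmr] at he1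
      exact ⟨r, ⟨⟨by omega, by omega⟩, he1⟩, by omega⟩
    · rintro ⟨r, ⟨⟨h1, h2'⟩, he⟩, rfl⟩
      have hmr : ((2*r : ℤ):ℝ)/2^(j-i) = (r:ℝ)/2^u := by
        rw [hji, pow_succ]
        push_cast
        field_simp
      refine ⟨⟨by omega, by omega⟩, ?_, ⟨r, by ring⟩⟩
      rw [hmr]; exact he
  rw [himg, Finset.card_image_of_injective _ (fun a b h => by omega)]
  rw [show (2:ℤ)^j = 2^(i+1) * 2^u by rw [← pow_add]; congr 1; omega]
  rw [count_even_ceil u (2^(i+1)) (by positivity)]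
  rw [show (2:ℤ)^(i+1) = 2 * 2^i by ring, count_even _ (by positivity)]
  rw [show ((2:ℤ)^i).toNat = 2^i by
    rw [show ((2:ℤ)^i) = ((2^i : ℕ) : ℤ) by push_cast; ring, Int.toNat_natCast]]
  rw [show (2^i * 2^u : ℕ) = 2^(i+u) by rw [pow_add]]
  rw [Nat.cast_pow, Nat.cast_ofNat]
  rw [show j + 1 = (i+u) + 2 by omega]
  rw [enn_pow_cancel (i+u) 2]
  norm_num

end Stmt3Aux
section Stmt3Prob

open scoped ENNReal
open ProbabilityTheory
open scoped Classical

private lemma enn_half_mul : (2:ENNReal)⁻¹ * 2⁻¹ = 4⁻¹ := by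
  rw [← ENNReal.mul_inv (Or.inl two_ne_zero) (Or.inl ENNReal.ofNat_ne_top)]
  norm_num

private lemma enn_quarter_add : (4:ENNReal)⁻¹ + 4⁻¹ = 2⁻¹ := by
  rw [← enn_half_mul, ← two_mul, ← mul_assoc]
  rw [show (2:ENNReal) * 2⁻¹ = 1 from ENNReal.mul_inv_cancel two_ne_zero ENNReal.ofNat_ne_top]
  rw [one_mul]

private lemma enn_half_add : (2:ENNReal)⁻¹ + 2⁻¹ = 1 := by
  rw [← two_mul]
  exact ENNReal.mul_inv_cancel two_ne_zero ENNReal.ofNat_ne_top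

private lemma indicator_preim (a : Set ℝ) (s : Set ℝ) :
    (a.indicator (fun _ => (1:ℝ)))⁻¹' s =
      if (1:ℝ) ∈ s then (if (0:ℝ) ∈ s then Set.univ else a)
      else (if (0:ℝ) ∈ s then aᶜ else ∅) := by
  ext ω
  by_cases hω : ω ∈ a <;>
    split_ifs with h1 h0 h0 <;>
    simp [Set.indicator_of_mem, Set.indicator_of_notMem, hω, h1, h0]

private lemma normal_ae :
    volume ({ω : ℝ | ¬ Filter.Tendsto
        (fun n => (∑ k ∈ Finset.range n, (dyadicDigit ω k : ℝ)) / (n : ℝ))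
        Filter.atTop (nhds (1 / 2))} ∩ Set.Ioc 0 1) = 0 := by
  classical
  set μ : MeasureTheory.Measure ℝ := volume.restrict (Set.Ioc (0:ℝ) 1) with hμdef
  have hU : μ Set.univ = 1 := by
    rw [hμdef, MeasureTheory.Measure.restrict_apply MeasurableSet.univ, Set.univ_inter,
      Real.volume_Ioc]
    norm_num
  have hprob : MeasureTheory.IsProbabilityMeasure μ := ⟨hU⟩
  have hμS : ∀ i, μ (DS i) = 2⁻¹ := fun i => by
    rw [hμdef, MeasureTheory.Measure.restrict_apply (measurableSet_DS i)]
    exact vol_DS i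
  have hμSS : ∀ i j, i ≠ j → μ (DS i ∩ DS j) = 4⁻¹ := by
    intro i j hij
    rw [hμdef, MeasureTheory.Measure.restrict_apply
      ((measurableSet_DS i).inter (measurableSet_DS j))]
    rcases hij.lt_or_gt with h | h
    · exact vol_DS_inter h
    · rw [Set.inter_comm (DS i) (DS j)]; exact vol_DS_inter h
  have hμSc : ∀ i, μ (DS i)ᶜ = 2⁻¹ := by
    intro i
    rw [MeasureTheory.measure_compl (measurableSet_DS i)
      (by rw [hμS i]; exact ENNReal.inv_ne_top.2 two_ne_zero), hμS i, hU]
    exact ENNReal.sub_eq_of_eq_add (ENNReal.inv_ne_top.2 two_ne_zero) enn_half_add.symm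
  have hdiff : ∀ i j, i ≠ j → μ (DS i ∩ (DS j)ᶜ) = 4⁻¹ := by
    intro i j hij
    have h := MeasureTheory.measure_inter_add_diff (μ := μ) (DS i) (measurableSet_DS j)
    rw [hμSS i j hij, hμS i, ← enn_quarter_add] at h
    have h2 := (ENNReal.add_right_inj (ENNReal.inv_ne_top.2 (by norm_num))).1 h
    rw [← Set.diff_eq]
    exact h2
  have hcS : ∀ i j, i ≠ j → μ ((DS i)ᶜ ∩ DS j) = 4⁻¹ := fun i j hij => by
    rw [Set.inter_comm]; exact hdiff j i hij.symm
  have hcdiff : ∀ i j, i ≠ j → μ ((DS i)ᶜ ∩ (DS j)ᶜ) = 4⁻¹ := by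
    intro i j hij
    have h := MeasureTheory.measure_inter_add_diff (μ := μ) ((DS i)ᶜ) (measurableSet_DS j)
    rw [hcS i j hij, hμSc i, ← enn_quarter_add] at h
    have h2 := (ENNReal.add_right_inj (ENNReal.inv_ne_top.2 (by norm_num))).1 h
    rw [← Set.diff_eq]
    exact h2
  set Y : ℕ → ℝ → ℝ := fun i => (DS i).indicator (fun _ => (1:ℝ)) with hYdef
  have hYmeas : ∀ i, Measurable (Y i) := fun i =>
    measurable_const.indicator (measurableSet_DS i)
  have hindep : Pairwise (Function.onFun (IndepFun · · μ) Y) := by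
    intro i j hij
    rw [Function.onFun, indepFun_iff_measure_inter_preimage_eq_mul]
    intro s t _ _
    rw [hYdef]
    simp only []
    rw [indicator_preim (DS i) s, indicator_preim (DS j) t]
    split_ifs <;>
      simp [Set.univ_inter, Set.inter_univ, Set.inter_empty, Set.empty_inter, hU,
        hμS, hμSc, hμSS i j hij, hdiff i j hij, hcS i j hij, hcdiff i j hij,
        enn_half_mul]
  have hident : ∀ i, ProbabilityTheory.IdentDistrib (Y i) (Y 0) μ μ := by
    intro i
    refine ⟨(hYmeas i).aemeasurable, (hYmeas 0).aemeasurable, ?_⟩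
    apply MeasureTheory.Measure.ext
    intro E hE
    rw [MeasureTheory.Measure.map_apply (hYmeas i) hE,
      MeasureTheory.Measure.map_apply (hYmeas 0) hE, hYdef]
    simp only []
    rw [indicator_preim (DS i) E, indicator_preim (DS 0) E]
    split_ifs <;> simp [hμS, hμSc]
  have hint : MeasureTheory.Integrable (Y 0) μ := by
    rw [hYdef]
    refine (MeasureTheory.integrable_indicator_iff (measurableSet_DS 0)).2 ?_
    refine MeasureTheory.integrableOn_const ?_
    rw [hμS 0]
    exact ne_of_lt (lt_of_le_of_lt (by simp) ENNReal.one_lt_top)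
  have hSLLN := ProbabilityTheory.strong_law_ae_real Y hint hindep hident
  have hmean : (∫ a, Y 0 a ∂μ) = 1/2 := by
    rw [hYdef]
    simp only []
    rw [MeasureTheory.integral_indicator_const (1:ℝ) (measurableSet_DS 0), MeasureTheory.Measure.real, hμS 0,
      smul_eq_mul, mul_one]
    simp [ENNReal.toReal_inv]
  rw [hmean] at hSLLN
  have hae : ∀ᵐ ω ∂μ, Filter.Tendsto
      (fun n => (∑ k ∈ Finset.range n, (dyadicDigit ω k : ℝ)) / (n : ℝ))
      Filter.atTop (nhds (1/2)) := by
    filter_upwards [hSLLN] with ω hω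
    have hsum : (fun n => (∑ k ∈ Finset.range n, (dyadicDigit ω k : ℝ)) / (n : ℝ))
        = fun n => (∑ k ∈ Finset.range n, Y k ω) / (n : ℝ) := by
      funext n
      congr 1
      exact Finset.sum_congr rfl fun k _ => digit_indicator ω k
    rw [hsum]
    exact hω
  have h0 : μ {ω : ℝ | ¬ Filter.Tendsto
      (fun n => (∑ k ∈ Finset.range n, (dyadicDigit ω k : ℝ)) / (n : ℝ))
      Filter.atTop (nhds (1/2))} = 0 := by
    rw [← MeasureTheory.ae_iff]
    exact hae
  have := MeasureTheory.Measure.le_restrict_apply (μ := volume) (Set.Ioc (0:ℝ) 1)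
    {ω : ℝ | ¬ Filter.Tendsto
      (fun n => (∑ k ∈ Finset.range n, (dyadicDigit ω k : ℝ)) / (n : ℝ))
      Filter.atTop (nhds (1/2))}
  rw [← hμdef, h0] at this
  exact le_antisymm this zero_le

end Stmt3Prob
/-- If `I` is a weakly thinnable ideal and `x` a sequence in a topological
space, then `Λ_{x↾ω}(I) ⊆ Λ_x(I)` for every normal number `ω ∈ (0,1]`, and hence for
Lebesgue-almost every `ω ∈ (0,1]`. -/
theorem stmt3 {X : Type*} [TopologicalSpace X] (I : Set (Set ℕ)) (hI : IsIdealOnNat I)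
    (hwt : WeaklyThinnable I) (x : ℕ → X) :
    (∀ ω ∈ Set.Ioc (0 : ℝ) 1,
      Tendsto (fun n => (∑ i ∈ Finset.range n, (dyadicDigit ω i : ℝ)) / (n : ℝ))
        atTop (𝓝 (1 / 2)) →
      idealLimitPoints I (subseq x ω) ⊆ idealLimitPoints I x) ∧
    volume {ω ∈ Set.Ioc (0 : ℝ) 1 |
      idealLimitPoints I (subseq x ω) ⊆ idealLimitPoints I x} = 1 := by
  have part1 : ∀ ω ∈ Set.Ioc (0 : ℝ) 1,
      Tendsto (fun n => (∑ i ∈ Finset.range n, (dyadicDigit ω i : ℝ)) / (n : ℝ))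
        atTop (𝓝 (1 / 2)) →
      idealLimitPoints I (subseq x ω) ⊆ idealLimitPoints I x := by
    intro ω _ hnorm l hl
    set A : Set ℕ := {i | dyadicDigit ω i = 1} with hAdef
    have hAdens : HasDensity A (1/2) := by
      unfold HasDensity
      have hsum : ∀ n : ℕ, ∑ i ∈ Finset.range n, A.indicator (fun _ => (1:ℝ)) i
          = ∑ i ∈ Finset.range n, (dyadicDigit ω i : ℝ) := by
        intro n
        refine Finset.sum_congr rfl fun i _ => ?_
        by_cases h : dyadicDigit ω i = 1
        · have hiA : i ∈ A := h
          rw [Set.indicator_of_mem hiA, h]; norm_num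
        · have h1 := digit_le_one ω i
          have h0 : dyadicDigit ω i = 0 := by omega
          have hiA : i ∉ A := fun hc => h hc
          rw [Set.indicator_of_notMem hiA, h0]; norm_num
      simp only [hsum]
      exact hnorm
    have hAinf : A.Infinite := by
      by_contra hfin
      rw [Set.not_infinite] at hfin
      obtain ⟨b, hb⟩ := hfin.bddAbove
      have hzero : Tendsto (fun n : ℕ =>
          (∑ i ∈ Finset.range n, A.indicator (fun _ => (1:ℝ)) i) / (n:ℝ))
          atTop (𝓝 0) := by
        refine Tendsto.congr' ?_ (tendsto_const_div_atTop_nhds_zero_nat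
          (∑ i ∈ Finset.range (b+1), A.indicator (fun _ => (1:ℝ)) i))
        filter_upwards [Filter.eventually_ge_atTop (b+1)] with n hn
        congr 1
        refine Finset.sum_subset (Finset.range_subset_range.2 hn) ?_
        intro i _ hi
        rw [Finset.mem_range, not_lt] at hi
        have hiA : i ∉ A := fun hiA => by have := hb hiA; omega
        exact Set.indicator_of_notMem hiA _
      have hcontra := tendsto_nhds_unique hAdens hzero
      norm_num at hcontra
    obtain ⟨B, hB, hconv⟩ := hl
    refine ⟨sel A B, hwt A B ⟨1/2, by norm_num, hAdens⟩ hB, ?_⟩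
    rw [ConvergesAlong, Filter.tendsto_def]
    intro U hU
    have h1 := hconv hU
    rw [Filter.mem_map, Filter.mem_inf_principal, Filter.mem_atTop_sets] at h1
    obtain ⟨N, hN⟩ := h1
    rw [Filter.mem_inf_principal, Filter.mem_atTop_sets]
    refine ⟨Nat.nth (· ∈ A) N, fun n hn hnsel => ?_⟩
    obtain ⟨b, hbB, rfl⟩ := hnsel
    exact hN b ((Nat.nth_le_nth hAinf).1 hn) hbB
  refine ⟨part1, ?_⟩
  set T := {ω ∈ Set.Ioc (0:ℝ) 1 |
    idealLimitPoints I (subseq x ω) ⊆ idealLimitPoints I x} with hTdef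
  set Bad := {ω : ℝ | ¬ Tendsto
      (fun n => (∑ k ∈ Finset.range n, (dyadicDigit ω k : ℝ)) / (n : ℝ))
      atTop (𝓝 (1 / 2))} ∩ Set.Ioc 0 1 with hBaddef
  apply le_antisymm
  · calc volume T ≤ volume (Set.Ioc (0:ℝ) 1) := measure_mono fun ω hω => hω.1
      _ = 1 := by rw [Real.volume_Ioc]; norm_num
  · have h1 : Set.Ioc (0:ℝ) 1 ⊆ T ∪ Bad := by
      intro ω hω
      by_cases hN : Tendsto
          (fun n => (∑ k ∈ Finset.range n, (dyadicDigit ω k : ℝ)) / (n : ℝ))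
          atTop (𝓝 (1 / 2))
      · exact Or.inl ⟨hω, part1 ω hω hN⟩
      · exact Or.inr ⟨hN, hω⟩
    calc (1:ENNReal) = volume (Set.Ioc (0:ℝ) 1) := by rw [Real.volume_Ioc]; norm_num
      _ ≤ volume (T ∪ Bad) := measure_mono h1
      _ ≤ volume T + volume Bad := measure_union_le _ _
      _ = volume T := by rw [hBaddef, normal_ae, add_zero]
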